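/- Let G be a group, x ∈ G, and let z(i,j) ∈ G for i, j ≥ 1 be a family of elements such that any two elements z(i,j) and z(k,l) commute, and such that [z(i,j), x] = z(i+1,j) · z(i,j+1) · z(i+1,j+1) for all i, j ≥ 1. Then for all i, j ≥ 1 and all r ≥ 0, the left-normed iterated commutator [z(i,j), x, x, …, x] (with r copies of x) equals the product ∏_{s=0}^{r} ∏_{t=0}^{s} z(i + r − t, j + r − s + t)^{\binom{r}{s}\binom{s}{t}} (the order of the factors is immaterial since they all commute). -/

import Mathlib

/-- Pascal-type product identity used twice. -/
private lemma pascal_prod {H : Type*} [CommMonoid H] (u : ℕ → H) (m : ℕ) :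
    ∏ k ∈ Finset.range (m+2), u k ^ ((m+1).choose k) =
      (∏ k ∈ Finset.range (m+1), u (k+1) ^ (m.choose k)) *
      (∏ k ∈ Finset.range (m+1), u k ^ (m.choose k)) := by
  have h1 := Finset.prod_range_succ' (fun k => u k ^ ((m+1).choose k)) (m+1)
  have h2 := Finset.prod_range_succ' (fun k => u k ^ (m.choose k)) (m+1)
  have h3 := Finset.prod_range_succ (fun k => u k ^ (m.choose k)) (m+1)
  simp only [Nat.choose_succ_succ, pow_add, Finset.prod_mul_distrib, Nat.choose_zero_right,
    Nat.choose_succ_self, pow_one, pow_zero, mul_one] at h1 h2 h3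
  rw [h1]
  have h4 : (∏ k ∈ Finset.range (m+1), u (k+1) ^ (m.choose (k+1))) * u 0 =
      ∏ k ∈ Finset.range (m+1), u k ^ (m.choose k) := h2.symm.trans h3
  rw [mul_assoc, h4]

private lemma key_comm {H : Type*} [CommGroup H] (w : ℕ → ℕ → H) (ψ : H →* H)
    (hw : ∀ a b, 1 ≤ a → 1 ≤ b → ψ (w a b) = w (a+1) b * w a (b+1) * w (a+1) (b+1))
    (i j : ℕ) (hi : 1 ≤ i) (hj : 1 ≤ j) : ∀ r : ℕ,
    ψ^[r] (w i j) = ∏ s ∈ Finset.range (r+1), (∏ t ∈ Finset.range (s+1),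
      w (i+r-t) (j+r-s+t) ^ (s.choose t)) ^ (r.choose s) := by
  intro r
  induction r with
  | zero => simp
  | succ r ih =>
    rw [Function.iterate_succ_apply', ih, map_prod]
    -- abbreviation for the (r+1)-level inner products
    have inner : ∀ s ∈ Finset.range (r+1),
        ψ ((∏ t ∈ Finset.range (s+1), w (i+r-t) (j+r-s+t) ^ (s.choose t)) ^ (r.choose s)) =
        ((∏ t ∈ Finset.range (s+2), w (i+(r+1)-t) (j+(r+1)-(s+1)+t) ^ ((s+1).choose t)) *
         (∏ t ∈ Finset.range (s+1), w (i+(r+1)-t) (j+(r+1)-s+t) ^ (s.choose t))) ^ (r.choose s) := by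
      intro s hs
      have hsr : s ≤ r := Nat.lt_succ_iff.mp (Finset.mem_range.mp hs)
      rw [map_pow, map_prod]
      congr 1
      have expand : ∀ t ∈ Finset.range (s+1),
          ψ (w (i+r-t) (j+r-s+t) ^ (s.choose t)) =
          (w (i+r-t+1) (j+r-s+t) * w (i+r-t) (j+r-s+t+1) * w (i+r-t+1) (j+r-s+t+1))
            ^ (s.choose t) := by
        intro t ht
        have hts : t ≤ s := Nat.lt_succ_iff.mp (Finset.mem_range.mp ht)
        rw [map_pow, hw (i+r-t) (j+r-s+t) (by omega) (by omega)]
      rw [Finset.prod_congr rfl expand]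
      simp only [mul_pow, Finset.prod_mul_distrib]
      -- ∏C = T s
      have hC : (∏ t ∈ Finset.range (s+1), w (i+r-t+1) (j+r-s+t+1) ^ (s.choose t)) =
          ∏ t ∈ Finset.range (s+1), w (i+(r+1)-t) (j+(r+1)-s+t) ^ (s.choose t) := by
        refine Finset.prod_congr rfl fun t ht => ?_
        have hts : t ≤ s := Nat.lt_succ_iff.mp (Finset.mem_range.mp ht)
        have e1 : i+r-t+1 = i+(r+1)-t := by omega
        have e2 : j+r-s+t+1 = j+(r+1)-s+t := by omega
        rw [e1, e2]
      -- ∏A * ∏B = T (s+1)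
      have hAB : (∏ t ∈ Finset.range (s+2), w (i+(r+1)-t) (j+(r+1)-(s+1)+t) ^ ((s+1).choose t)) =
          (∏ t ∈ Finset.range (s+1), w (i+r-t) (j+r-s+t+1) ^ (s.choose t)) *
          (∏ t ∈ Finset.range (s+1), w (i+r-t+1) (j+r-s+t) ^ (s.choose t)) := by
        have hp := pascal_prod (fun t => w (i+(r+1)-t) (j+r-s+t)) s
        have e0 : ∀ t ∈ Finset.range (s+2),
            w (i+(r+1)-t) (j+(r+1)-(s+1)+t) ^ ((s+1).choose t) =
            w (i+(r+1)-t) (j+r-s+t) ^ ((s+1).choose t) := by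
          intro t ht
          have : j+(r+1)-(s+1) = j+r-s := by omega
          rw [this]
        rw [Finset.prod_congr rfl e0, hp]
        congr 1
        · refine Finset.prod_congr rfl fun t ht => ?_
          have hts : t ≤ s := Nat.lt_succ_iff.mp (Finset.mem_range.mp ht)
          have e1 : i+(r+1)-(t+1) = i+r-t := by omega
          have e2 : j+r-s+(t+1) = j+r-s+t+1 := by omega
          rw [e1, e2]
        · refine Finset.prod_congr rfl fun t ht => ?_
          have hts : t ≤ s := Nat.lt_succ_iff.mp (Finset.mem_range.mp ht)
          have e1 : i+(r+1)-t = i+r-t+1 := by omega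
          rw [e1]
      rw [hC, hAB]
      ac_rfl
    rw [Finset.prod_congr rfl inner]
    -- now outer Pascal with T u = ∏ t ∈ range (u+1), w (i+(r+1)-t) (j+(r+1)-u+t) ^ u.choose t
    have hp := pascal_prod
      (fun u => ∏ t ∈ Finset.range (u+1), w (i+(r+1)-t) (j+(r+1)-u+t) ^ (u.choose t)) r
    simp only [mul_pow, Finset.prod_mul_distrib]
    rw [← hp]

private lemma list_range_map_prod {H G : Type*} [CommMonoid H] [Monoid G] (φ : H →* G)
    (f : ℕ → H) (n : ℕ) :
    ((List.range n).map fun k => φ (f k)).prod = φ (∏ k ∈ Finset.range n, f k) := by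
  induction n with
  | zero => simp
  | succ n ih =>
    rw [List.range_succ, List.map_append, List.prod_append, Finset.prod_range_succ, map_mul, ih]
    simp

/-- The commutator `[u,v] = u⁻¹ v⁻¹ u v`. -/
def cmt {G : Type*} [Group G] (u v : G) : G := u⁻¹ * v⁻¹ * u * v

/-- The left-normed iterated commutator `[g, x, x, …, x]` with `r` copies of `x`. -/
def iteratedCmt {G : Type*} [Group G] (g x : G) : ℕ → G
  | 0 => g
  | (r + 1) => cmt (iteratedCmt g x r) x

/-- Lemma 4.4:  if the elements `z i j` (for `i, j ≥ 1`) pairwise commute and satisfy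
`[z i j, x] = z (i+1) j · z i (j+1) · z (i+1) (j+1)`, then
`[z i j, x, …, x]` (`r` copies of `x`) equals
`∏_{s=0}^{r} ∏_{t=0}^{s} z (i+r−t) (j+r−s+t) ^ (C(r,s)·C(s,t))`. -/
theorem iterated_commutator_formula {G : Type*} [Group G] (x : G) (z : ℕ → ℕ → G)
    (hcomm : ∀ i j k l, 1 ≤ i → 1 ≤ j → 1 ≤ k → 1 ≤ l → Commute (z i j) (z k l))
    (hrel : ∀ i j, 1 ≤ i → 1 ≤ j →
      cmt (z i j) x = z (i + 1) j * z i (j + 1) * z (i + 1) (j + 1)) :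
    ∀ i j r, 1 ≤ i → 1 ≤ j →
      iteratedCmt (z i j) x r =
        ((List.range (r + 1)).map fun s =>
          ((List.range (s + 1)).map fun t =>
            z (i + r - t) (j + r - s + t) ^ (r.choose s * s.choose t)).prod).prod := by
  intro i j r hi hj
  set S : Set G := {g | ∃ a b, 1 ≤ a ∧ 1 ≤ b ∧ g = z a b} with hS
  set H : Subgroup G := Subgroup.closure S with hHdef
  have hmemz : ∀ a b, 1 ≤ a → 1 ≤ b → z a b ∈ H := fun a b ha hb =>
    Subgroup.subset_closure ⟨a, b, ha, hb, rfl⟩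
  have hcS : ∀ g ∈ S, ∀ h ∈ H, Commute g h := by
    rintro g ⟨a, b, ha, hb, rfl⟩ h hh
    induction hh using Subgroup.closure_induction with
    | mem g' hg' => obtain ⟨c, d, hc, hd, rfl⟩ := hg'; exact hcomm a b c d ha hb hc hd
    | one => exact Commute.one_right _
    | mul g1 g2 _ _ h1 h2 => exact h1.mul_right h2
    | inv g1 _ h1 => exact h1.inv_right
  have hcH : ∀ g ∈ H, ∀ h ∈ H, Commute g h := by
    intro g hg
    induction hg using Subgroup.closure_induction with
    | mem g' hg' => exact hcS g' hg'
    | one => exact fun h _ => Commute.one_left h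
    | mul g1 g2 _ _ h1 h2 => exact fun h hh => (h1 h hh).mul_left (h2 h hh)
    | inv g1 _ h1 => exact fun h hh => (h1 h hh).inv_left
  letI : CommGroup H := { (inferInstance : Group H) with
    mul_comm := fun a b => Subtype.ext (hcH a.1 a.2 b.1 b.2) }
  -- conjugation maps H to H
  have hmapH : ∀ g ∈ H, x⁻¹ * g * x ∈ H := by
    have hle : Subgroup.map (MulAut.conj x⁻¹).toMonoidHom H ≤ H := by
      rw [hHdef, MonoidHom.map_closure, Subgroup.closure_le]
      rintro _ ⟨g, ⟨a, b, ha, hb, rfl⟩, rfl⟩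
      have hz : (MulAut.conj x⁻¹).toMonoidHom (z a b) =
          z a b * (z (a+1) b * z a (b+1) * z (a+1) (b+1)) := by
        have h1 := hrel a b ha hb
        unfold cmt at h1
        rw [← h1]
        simp [MulAut.conj_apply, mul_assoc]
      rw [hz]
      exact mul_mem (hmemz a b ha hb)
        (mul_mem (mul_mem (hmemz _ _ (by omega) hb) (hmemz _ _ ha (by omega)))
          (hmemz _ _ (by omega) (by omega)))
    intro g hg
    have : x⁻¹ * g * x ∈ Subgroup.map (MulAut.conj x⁻¹).toMonoidHom H := by
      refine ⟨g, hg, ?_⟩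
      simp [MulAut.conj_apply, mul_assoc]
    exact hle this
  -- the endomorphism ψ of H
  let ψ : H →* H :=
    { toFun := fun g => ⟨(g : G)⁻¹ * (x⁻¹ * g * x), mul_mem (inv_mem g.2) (hmapH g g.2)⟩
      map_one' := by ext; simp
      map_mul' := by
        intro a b
        ext
        show ((a : G) * b)⁻¹ * (x⁻¹ * (a * b) * x) =
          ((a : G)⁻¹ * (x⁻¹ * a * x)) * ((b : G)⁻¹ * (x⁻¹ * b * x))
        have hcab : Commute ((a : G)⁻¹ * (x⁻¹ * a * x)) ((b : G)⁻¹) :=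
          (hcH _ (mul_mem (inv_mem a.2) (hmapH a a.2)) _ b.2).inv_right
        calc ((a : G) * b)⁻¹ * (x⁻¹ * (a * b) * x)
            = (b : G)⁻¹ * (((a : G)⁻¹ * (x⁻¹ * a * x)) * (x⁻¹ * b * x)) := by group
          _ = (b : G)⁻¹ * (((a : G)⁻¹ * (x⁻¹ * a * x)) * ((x⁻¹ * b * x))) := rfl
          _ = (((a : G)⁻¹ * (x⁻¹ * a * x)) * (b : G)⁻¹) * (x⁻¹ * b * x) := by
              rw [← mul_assoc, ← hcab.eq]
          _ = ((a : G)⁻¹ * (x⁻¹ * a * x)) * ((b : G)⁻¹ * (x⁻¹ * b * x)) := by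
              rw [mul_assoc] }
  -- the H-valued family
  let w : ℕ → ℕ → H := fun a b =>
    if h : 1 ≤ a ∧ 1 ≤ b then ⟨z a b, hmemz a b h.1 h.2⟩ else 1
  have hwval : ∀ a b (ha : 1 ≤ a) (hb : 1 ≤ b), (w a b : G) = z a b := by
    intro a b ha hb
    simp only [w, dif_pos (And.intro ha hb)]
  have hw : ∀ a b, 1 ≤ a → 1 ≤ b →
      ψ (w a b) = w (a+1) b * w a (b+1) * w (a+1) (b+1) := by
    intro a b ha hb
    ext
    show ((w a b : G))⁻¹ * (x⁻¹ * (w a b : G) * x) =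
      ((w (a+1) b : G)) * (w a (b+1) : G) * (w (a+1) (b+1) : G)
    rw [hwval a b ha hb, hwval _ _ (by omega) hb, hwval _ _ ha (by omega),
      hwval _ _ (by omega) (by omega), ← hrel a b ha hb]
    unfold cmt
    group
  -- iterated commutator is given by iterating ψ
  have hiter : ∀ n, iteratedCmt (z i j) x n = ((ψ^[n] (w i j) : H) : G) := by
    intro n
    induction n with
    | zero =>
      show z i j = ((w i j : H) : G)
      rw [hwval i j hi hj]
    | succ n ih =>
      rw [Function.iterate_succ_apply']
      show cmt (iteratedCmt (z i j) x n) x = _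
      rw [ih]
      show _ = ((ψ^[n] (w i j) : H) : G)⁻¹ * (x⁻¹ * (ψ^[n] (w i j) : H) * x)
      unfold cmt
      group
  rw [hiter r, key_comm w ψ hw i j hi hj r]
  -- convert the RHS list products
  have inner_eq : ∀ s ∈ List.range (r + 1),
      ((List.range (s + 1)).map fun t =>
        z (i + r - t) (j + r - s + t) ^ (r.choose s * s.choose t)).prod =
      H.subtype ((∏ t ∈ Finset.range (s+1),
        w (i + r - t) (j + r - s + t) ^ (s.choose t)) ^ (r.choose s)) := by
    intro s hs
    have hsr : s ≤ r := Nat.lt_succ_iff.mp (List.mem_range.mp hs)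
    have h1 : ∀ t ∈ List.range (s+1),
        z (i + r - t) (j + r - s + t) ^ (r.choose s * s.choose t) =
        H.subtype (w (i + r - t) (j + r - s + t) ^ (r.choose s * s.choose t)) := by
      intro t ht
      have hts : t ≤ s := Nat.lt_succ_iff.mp (List.mem_range.mp ht)
      rw [map_pow]
      congr 1
      exact (hwval _ _ (by omega) (by omega)).symm
    rw [List.map_congr_left h1, list_range_map_prod H.subtype _ (s+1)]
    congr 1
    rw [← Finset.prod_pow]
    refine Finset.prod_congr rfl fun t ht => ?_
    rw [← pow_mul, mul_comm]
  rw [List.map_congr_left inner_eq,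
    list_range_map_prod H.subtype
      (fun s => (∏ t ∈ Finset.range (s+1), w (i + r - t) (j + r - s + t) ^ (s.choose t)) ^ (r.choose s))
      (r+1)]
  rfl
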